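/- Let a group Γ act transitively on a finite set X, and let s be a symmetric irreflexive orbit of the diagonal action of Γ on X × X, defining a simple graph G on X with adjacency relation s. Then all projected edge vectors of G have the same norm: ‖P χ_(a,b)‖ = ‖P χ_(c,d)‖ for every two pairs (a,b), (c,d) of adjacent vertices of G. -/

import Mathlib

open scoped BigOperators RealInnerProductSpace

noncomputable section

variable {V : Type*} [Fintype V] [DecidableEq V]

/-- The indicator chain `χ_(a,b)`: 1 at `(a,b)`, −1 at `(b,a)`, 0 elsewhere. -/
def edgeChi (a b : V) : EuclideanSpace ℝ (V × V) :=
  WithLp.toLp 2 (fun p => if p = (a, b) then 1 else if p = (b, a) then -1 else 0)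

/-- The cycle space `H` of a simple graph `G`: the kernel of the boundary map
restricted to the edge space `C₁`. -/
def cycleSpace (G : SimpleGraph V) : Submodule ℝ (EuclideanSpace ℝ (V × V)) where
  carrier := { f | (∀ u v : V, f (u, v) = - f (v, u)) ∧
               (∀ u v : V, ¬ G.Adj u v → f (u, v) = 0) ∧
               (∀ v : V, ∑ u : V, f (u, v) = 0) }
  add_mem' := by
    rintro f g ⟨hf1, hf2, hf3⟩ ⟨hg1, hg2, hg3⟩
    refine ⟨fun u v => ?_, fun u v h => ?_, fun v => ?_⟩
    · show f (u, v) + g (u, v) = -(f (v, u) + g (v, u))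
      rw [hf1 u v, hg1 u v]; ring
    · show f (u, v) + g (u, v) = 0
      rw [hf2 u v h, hg2 u v h]; ring
    · show ∑ u : V, (f (u, v) + g (u, v)) = 0
      rw [Finset.sum_add_distrib, hf3 v, hg3 v]; ring
  zero_mem' := by
    refine ⟨fun u v => ?_, fun u v h => ?_, fun v => ?_⟩ <;> simp
  smul_mem' := by
    rintro c f ⟨hf1, hf2, hf3⟩
    refine ⟨fun u v => ?_, fun u v h => ?_, fun v => ?_⟩
    · show c * f (u, v) = -(c * f (v, u))
      rw [hf1 u v]; ring
    · show c * f (u, v) = 0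
      rw [hf2 u v h]; ring
    · show ∑ u : V, c * f (u, v) = 0
      rw [← Finset.mul_sum, hf3 v]; ring

/-- The projected edge vector `P χ_(a,b)`, where `P` is the orthogonal projection
onto the cycle space of `G`. -/
def projEdge (G : SimpleGraph V) (a b : V) : EuclideanSpace ℝ (V × V) :=
  ((cycleSpace G).orthogonalProjectionOnto (edgeChi a b) : EuclideanSpace ℝ (V × V))



/-- The coordinate-permuting linear isometry of `EuclideanSpace ℝ (X × X)`
induced by the action of a group element. -/
noncomputable def actIso {Γ X : Type*} [Group Γ] [MulAction Γ X] [Fintype X] (g : Γ) :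
    EuclideanSpace ℝ (X × X) ≃ₗᵢ[ℝ] EuclideanSpace ℝ (X × X) :=
  LinearIsometryEquiv.piLpCongrLeft 2 ℝ ℝ (MulAction.toPerm g : X × X ≃ X × X)

theorem actIso_apply {Γ X : Type*} [Group Γ] [MulAction Γ X] [Fintype X] (g : Γ)
    (f : EuclideanSpace ℝ (X × X)) (p : X × X) :
    actIso g f p = f (g⁻¹ • p) := rfl

theorem actIso_symm {Γ X : Type*} [Group Γ] [MulAction Γ X] [Fintype X] (g : Γ) :
    (actIso (X := X) g).symm = actIso g⁻¹ := by
  rw [actIso, LinearIsometryEquiv.piLpCongrLeft_symm]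
  unfold actIso
  congr 1
  exact Equiv.ext fun p => rfl

theorem actIso_mem_cycleSpace
    {Γ X : Type*} [Group Γ] [MulAction Γ X] [Fintype X] [DecidableEq X]
    (s : Set (X × X)) (hs : ∃ p : X × X, s = MulAction.orbit Γ p)
    (G : SimpleGraph X) (hG : ∀ x y : X, G.Adj x y ↔ (x, y) ∈ s)
    (g : Γ) (f : EuclideanSpace ℝ (X × X)) (hf : f ∈ cycleSpace G) :
    actIso g f ∈ cycleSpace G := by
  obtain ⟨hf1, hf2, hf3⟩ := hf
  obtain ⟨p₀, rfl⟩ := hs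
  refine ⟨fun u v => ?_, fun u v h => ?_, fun v => ?_⟩
  · show f (g⁻¹ • (u, v)) = - f (g⁻¹ • (v, u))
    exact hf1 _ _
  · show f (g⁻¹ • (u, v)) = 0
    refine hf2 _ _ fun hadj => h ?_
    rw [hG] at hadj ⊢
    obtain ⟨h₁, h₂⟩ := hadj
    refine ⟨g * h₁, ?_⟩
    show (g * h₁) • p₀ = (u, v)
    have h₂' : h₁ • p₀ = (g⁻¹ • u, g⁻¹ • v) := h₂
    rw [mul_smul, h₂']
    simp [Prod.smul_def]
  · show ∑ u : X, f (g⁻¹ • (u, v)) = 0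
    have := hf3 (g⁻¹ • v)
    rw [← this]
    exact Finset.sum_bijective (fun u => g⁻¹ • u)
      (MulAction.bijective g⁻¹) (by simp) (fun u _ => rfl)

theorem actIso_map_cycleSpace
    {Γ X : Type*} [Group Γ] [MulAction Γ X] [Fintype X] [DecidableEq X]
    (s : Set (X × X)) (hs : ∃ p : X × X, s = MulAction.orbit Γ p)
    (G : SimpleGraph X) (hG : ∀ x y : X, G.Adj x y ↔ (x, y) ∈ s)
    (g : Γ) :
    (cycleSpace G).map ((actIso (X := X) g).toLinearEquiv :
        EuclideanSpace ℝ (X × X) →ₗ[ℝ] EuclideanSpace ℝ (X × X)) = cycleSpace G := by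
  apply le_antisymm
  · rintro _ ⟨f, hf, rfl⟩
    exact actIso_mem_cycleSpace s hs G hG g f hf
  · intro f hf
    refine ⟨actIso g⁻¹ f, actIso_mem_cycleSpace s hs G hG g⁻¹ f hf, ?_⟩
    ext p
    show f (g⁻¹⁻¹ • g⁻¹ • p) = f p
    rw [inv_inv, smul_inv_smul]

theorem actIso_edgeChi {Γ X : Type*} [Group Γ] [MulAction Γ X] [Fintype X] [DecidableEq X]
    (g : Γ) (a b : X) :
    actIso g (edgeChi a b) = edgeChi (g • a) (g • b) := by
  ext p
  show edgeChi a b (g⁻¹ • p) = edgeChi (g • a) (g • b) p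
  unfold edgeChi
  have h1 : g⁻¹ • p = (a, b) ↔ p = (g • a, g • b) := by
    rw [inv_smul_eq_iff]; rfl
  have h2 : g⁻¹ • p = (b, a) ↔ p = (g • b, g • a) := by
    rw [inv_smul_eq_iff]; rfl
  simp only [h1, h2]

/-- **Conjecture 1.2 for Schurian schemes.** The projected edge vectors of the simple
graph defined by a symmetric irreflexive orbit of the diagonal action of a transitive
group on `X × X` all have the same norm. -/
theorem schurian_graph_proj_norm_eq
    {Γ X : Type*} [Group Γ] [MulAction Γ X] [Fintype X] [DecidableEq X]
    [MulAction.IsPretransitive Γ X]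
    (s : Set (X × X)) (hs : ∃ p : X × X, s = MulAction.orbit Γ p)
    (hsymm : ∀ x y : X, (x, y) ∈ s ↔ (y, x) ∈ s)
    (hirr : ∀ x : X, (x, x) ∉ s)
    (G : SimpleGraph X) (hG : ∀ x y : X, G.Adj x y ↔ (x, y) ∈ s) :
    ∀ a b c d : X, G.Adj a b → G.Adj c d →
      ‖projEdge G a b‖ = ‖projEdge G c d‖ := by
  intro a b c d hab hcd
  obtain ⟨p₀, hp₀⟩ := id hs
  have habs : (a, b) ∈ s := (hG a b).1 hab
  have hcds : (c, d) ∈ s := (hG c d).1 hcd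
  rw [hp₀] at habs hcds
  have : (c, d) ∈ MulAction.orbit Γ (a, b) := by
    rw [MulAction.orbit_eq_iff.2 habs]; exact hcds
  obtain ⟨g, hg⟩ := this
  have hcd' : (g • a, g • b) = (c, d) := hg
  have hac : g • a = c := (Prod.ext_iff.mp hcd').1
  have hbd : g • b = d := (Prod.ext_iff.mp hcd').2
  have hchi : actIso g (edgeChi a b) = edgeChi c d := by
    rw [actIso_edgeChi, hac, hbd]
  have hproj : projEdge G c d = actIso g (projEdge G a b) := by
    unfold projEdge
    set w : EuclideanSpace ℝ (X × X) :=
      ((cycleSpace G).orthogonalProjectionOnto (edgeChi a b) : EuclideanSpace ℝ (X × X)) with hwdef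
    have hwK : w ∈ cycleSpace G := ((cycleSpace G).orthogonalProjectionOnto (edgeChi a b)).2
    have hw : actIso g w ∈ cycleSpace G := actIso_mem_cycleSpace s hs G hG g _ hwK
    have hperp : edgeChi c d - actIso g w ∈ (cycleSpace G)ᗮ := by
      rw [← hchi, ← map_sub]
      intro y hy
      have hy' : (actIso (X := X) g).symm y ∈ cycleSpace G := by
        rw [actIso_symm]
        exact actIso_mem_cycleSpace s hs G hG g⁻¹ y hy
      have h0 : edgeChi a b - w ∈ (cycleSpace G)ᗮ :=
        Submodule.sub_starProjection_mem_orthogonal (K := cycleSpace G) (edgeChi a b)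
      have hz : ⟪(actIso (X := X) g).symm y, edgeChi a b - w⟫ = (0 : ℝ) := h0 _ hy'
      have : ⟪y, actIso g (edgeChi a b - w)⟫ =
          ⟪(actIso (X := X) g).symm y, edgeChi a b - w⟫ := by
        conv_lhs => rw [← (actIso (X := X) g).apply_symm_apply y]
        exact (actIso (X := X) g).inner_map_map _ _
      rw [this, hz]
    exact Submodule.eq_starProjection_of_mem_orthogonal hw hperp
  rw [hproj, (actIso (X := X) g).norm_map]

end
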